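/- Let X = ℝ × ℝ_d, where ℝ_d is ℝ with the discrete topology, and let μ be a Haar measure on the locally compact group X. Then the fixed-point set {0} × ℝ_d of the homeomorphism s(x,y) = (−x,y) satisfies μ({0} × ℝ_d) = +∞, while every compact subset K of {0} × ℝ_d satisfies μ(K) = 0. -/

import Mathlib

open MeasureTheory
open scoped ENNReal

/-- The real line with the discrete topology. -/
def Rd : Type := ℝ

instance : AddCommGroup Rd := inferInstanceAs (AddCommGroup ℝ)
instance : TopologicalSpace Rd := ⊥
instance : DiscreteTopology Rd := ⟨rfl⟩
instance : IsTopologicalAddGroup Rd where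
  continuous_add := continuous_of_discreteTopology
  continuous_neg := continuous_of_discreteTopology
instance : MeasurableSpace Rd := ⊤

instance : BorelSpace Rd := ⟨(borel_eq_top_of_discrete).symm⟩

/-- The origin of `ℝ × Rd` is not isolated. -/
instance : Filter.NeBot (nhdsWithin (0 : ℝ × Rd) {(0 : ℝ × Rd)}ᶜ) := by
  rw [← mem_closure_iff_nhdsWithin_neBot]
  refine mem_closure_of_tendsto (f := fun n : ℕ => ((1/(n+1) : ℝ), (0 : Rd)))
    ((tendsto_one_div_add_atTop_nhds_zero_nat).prodMk_nhds tendsto_const_nhds) ?_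
  · filter_upwards with n
    simp only [Set.mem_compl_iff, Set.mem_singleton_iff]
    intro h
    have h1 : (1:ℝ)/(n+1) = 0 := congrArg Prod.fst h
    have : (1:ℝ)/(n+1) ≠ 0 := by positivity
    exact this h1

/-- Let `X = ℝ × ℝ_d` (the plane with the usual topology in the first
coordinate and the discrete topology in the second) and let `μ` be a Haar measure on the
locally compact group `X` (outer regular on Borel sets, inner regular on open sets).  The
fixed-point set of the homeomorphism `s(x, y) = (−x, y)` is `{0} × ℝ_d`; it has infinite
measure, while all of its compact subsets are null. -/
theorem haar_fixedSet_infinite_but_compact_null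
    (μ : Measure (ℝ × Rd)) (hHaar : μ.IsAddHaarMeasure)
    (houter : μ.OuterRegular)
    (hinner : ∀ U : Set (ℝ × Rd), IsOpen U →
      μ U = ⨆ (K : Set (ℝ × Rd)) (_ : IsCompact K) (_ : K ⊆ U), μ K) :
    {p : ℝ × Rd | ((-p.1, p.2) : ℝ × Rd) = p} = ({0} ×ˢ (Set.univ : Set Rd)) ∧
    μ ({0} ×ˢ (Set.univ : Set Rd)) = ⊤ ∧
    (∀ K : Set (ℝ × Rd), K ⊆ {0} ×ˢ (Set.univ : Set Rd) → IsCompact K → μ K = 0) := by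
  haveI := hHaar
  haveI : NullSingletonClass μ := inferInstance
  refine ⟨?_, ?_, ?_⟩
  · -- the fixed-point set is `{0} × ℝ_d`
    ext p
    constructor
    · intro h
      have h1 : -p.1 = p.1 := congrArg Prod.fst h
      have h2 : p.1 = 0 := by linarith
      exact ⟨h2, trivial⟩
    · intro h
      have h2 : p.1 = 0 := by simpa using (Set.mem_prod.mp h).1
      simp only [Set.mem_setOf_eq]
      rw [Prod.ext_iff]
      exact ⟨by simp [h2], rfl⟩
  · -- infinite measure
    have hS : MeasurableSet (({(0:ℝ)} : Set ℝ) ×ˢ (Set.univ : Set Rd)) := by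
      have h0 : (({(0:ℝ)} : Set ℝ) ×ˢ (Set.univ : Set Rd)) = (Prod.fst ⁻¹' {(0:ℝ)} : Set (ℝ × Rd)) := by
        ext ⟨a, b⟩; simp [eq_comm]
      rw [h0]
      exact measurable_fst (measurableSet_singleton 0)
    -- every open set containing the vertical axis has infinite measure
    have key : ∀ U : Set (ℝ × Rd), IsOpen U →
        (({(0:ℝ)} : Set ℝ) ×ˢ (Set.univ : Set Rd)) ⊆ U → μ U = ⊤ := by
      intro U hU hSU
      set A : ℕ → Set ℝ := fun m =>
        {y : ℝ | Set.Ioo (-(1/(m+1)) : ℝ) (1/(m+1)) ×ˢ ({(y : Rd)} : Set Rd) ⊆ U} with hA_def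
      have hcover : (Set.univ : Set ℝ) ⊆ ⋃ m, A m := by
        intro y _
        have hy : ((0 : ℝ), (y : Rd)) ∈ U := hSU (Set.mk_mem_prod (Set.mem_singleton _) (Set.mem_univ _))
        obtain ⟨s, hs, t, ht, hst⟩ := mem_nhds_prod_iff.mp (hU.mem_nhds hy)
        obtain ⟨δ, hδ, hball⟩ := Metric.mem_nhds_iff.mp hs
        obtain ⟨m, hm⟩ := exists_nat_one_div_lt hδ
        refine Set.mem_iUnion.mpr ⟨m, ?_⟩
        intro p hp
        obtain ⟨hp1, hp2⟩ := hp
        refine hst ⟨hball ?_, ?_⟩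
        · have h1 : |p.1| < 1/(m+1) := by
            rw [abs_lt]
            exact ⟨by simpa using hp1.1, hp1.2⟩
          have : |p.1 - 0| < δ := by
            rw [sub_zero]
            exact h1.trans hm
          exact Metric.mem_ball.mpr (by simpa [Real.dist_eq] using this)
        · have : p.2 = (y : Rd) := hp2
          rw [this]
          exact mem_of_mem_nhds ht
      have hAinf : ∃ m, (A m).Infinite := by
        by_contra h
        push_neg at h
        exact Cardinal.not_countable_real
          ((Set.countable_iUnion fun m => (h m).countable).mono hcover)
      obtain ⟨m, hm⟩ := hAinf
      set r : ℝ := 1/(m+1) with hr_def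
      have hr : 0 < r := by positivity
      set f := hm.natEmbedding with hf_def
      set T : ℕ → Set (ℝ × Rd) := fun k =>
        Set.Ioo (-r) r ×ˢ ({(((f k : ℝ)) : Rd)} : Set Rd) with hT_def
      have hTopen : ∀ k, IsOpen (T k) := fun k =>
        (isOpen_Ioo).prod (isOpen_discrete _)
      have hTsub : ∀ k, T k ⊆ U := fun k => (f k).2
      have hdisj : Pairwise (Function.onFun Disjoint T) := by
        intro k l hkl
        rw [Function.onFun, Set.disjoint_left]
        rintro ⟨a, b⟩ ⟨-, h2⟩ ⟨-, h4⟩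
        have hb2 : b = (((f k : ℝ)) : Rd) := h2
        have hb4 : b = (((f l : ℝ)) : Rd) := h4
        have : (f k : ℝ) = (f l : ℝ) := by rw [← hb2, hb4]
        exact hkl (f.injective (Subtype.coe_injective this))
      set c : ℝ≥0∞ := μ (Set.Ioo (-r) r ×ˢ ({(0 : Rd)} : Set Rd)) with hc_def
      have hc : 0 < c := by
        refine ((isOpen_Ioo).prod (isOpen_discrete _)).measure_pos μ ?_
        exact ⟨((0 : ℝ), (0 : Rd)), ⟨Set.mem_Ioo.mpr ⟨neg_lt_zero.mpr hr, hr⟩, rfl⟩⟩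
      have hTc : ∀ k, μ (T k) = c := by
        intro k
        have hpre := measure_preimage_add μ ((0 : ℝ), (((f k : ℝ)) : Rd)) (T k)
        rw [← hpre]
        congr 1
        ext x
        simp only [Set.mem_preimage, hT_def, Set.mem_prod, Set.mem_Ioo,
          Set.mem_singleton_iff, Prod.fst_add, Prod.snd_add, zero_add, add_eq_left]
        exact and_congr_right fun _ => (add_eq_left (a := (((f k : ℝ)) : Rd)) (b := x.2))
      have hUnion : μ (⋃ k, T k) = ⊤ := by
        rw [measure_iUnion hdisj fun k => (hTopen k).measurableSet]
        simp only [hTc]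
        exact ENNReal.tsum_const_eq_top_of_ne_zero hc.ne'
      exact top_le_iff.mp (hUnion ▸ measure_mono (Set.iUnion_subset hTsub))
    by_contra hne
    obtain ⟨U, hSU, hUopen, hUlt⟩ :=
      houter.outerRegular hS (μ (({(0:ℝ)} : Set ℝ) ×ˢ (Set.univ : Set Rd)) + 1)
        (ENNReal.lt_add_right hne one_ne_zero)
    rw [key U hUopen hSU] at hUlt
    exact not_top_lt hUlt
  · -- compact subsets are null
    intro K hKsub hK
    have himg : (Prod.snd '' K).Finite := by
      have hcomp : IsCompact (Prod.snd '' K) := hK.image continuous_snd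
      exact hcomp.finite (by exact DiscreteTopology.isDiscrete)
    have hKfin : K.Finite := by
      refine Set.Finite.subset ((Set.finite_singleton (0 : ℝ)).prod himg) ?_
      intro p hp
      exact ⟨(hKsub hp).1, ⟨p, hp, rfl⟩⟩
    exact hKfin.countable.measure_zero μ
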